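/- Let (n_k)_{k≥1} be a strictly increasing sequence of positive integers with n₁ = 1 and with the gaps n_{k+1} − n_k nondecreasing in k, and define ρ : {1,2,3,…} → {0,1} by ρ(i) = 0 if i = n_k for some k and ρ(i) = 1 otherwise. Then for all positive integers k and n: Σ_{i=1}^{n} ρ(i) ≤ Σ_{i=k+1}^{k+n} ρ(i). -/

import Mathlib

/-- proof of Lemma 3.2. Let `(n_k)_{k ≥ 1}` be a strictly increasing
sequence of positive integers with `n 1 = 1` and nondecreasing gaps, and let
`ρ i = 0` if `i = n k` for some `k ≥ 1` and `ρ i = 1` otherwise. Then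
`Σ_{i=1}^{n} ρ i ≤ Σ_{i=k+1}^{k+n} ρ i` for all positive integers `k, n`. -/
theorem statement8 (nk : ℕ → ℕ) (h1 : nk 1 = 1)
    (hmono : ∀ k : ℕ, 1 ≤ k → nk k < nk (k + 1))
    (hgap : ∀ k : ℕ, 1 ≤ k → nk (k + 1) - nk k ≤ nk (k + 2) - nk (k + 1))
    (ρ : ℕ → ℕ)
    (hρ0 : ∀ k : ℕ, 1 ≤ k → ρ (nk k) = 0)
    (hρ1 : ∀ i : ℕ, (∀ k : ℕ, 1 ≤ k → nk k ≠ i) → ρ i = 1) :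
    ∀ k n : ℕ, 1 ≤ k → 1 ≤ n →
      ∑ i ∈ Finset.Icc 1 n, ρ i ≤ ∑ i ∈ Finset.Icc (k + 1) (k + n), ρ i := by
  classical
  -- monotonicity facts
  have mono : ∀ a b : ℕ, 1 ≤ a → a ≤ b → nk a ≤ nk b := by
    intro a b ha hab
    induction hab with
    | refl => exact le_rfl
    | step h ih => exact ih.trans (le_of_lt (hmono _ (le_trans ha h)))
  have strictm : ∀ a b : ℕ, 1 ≤ a → a < b → nk a < nk b := by
    intro a b ha h
    have h1' : nk a ≤ nk (b - 1) := mono a (b - 1) ha (by omega)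
    have h2 : nk (b - 1) < nk (b - 1 + 1) := hmono (b - 1) (by omega)
    have : b - 1 + 1 = b := by omega
    rw [this] at h2
    omega
  have selfle : ∀ j : ℕ, 1 ≤ j → j ≤ nk j := by
    intro j hj
    induction j with
    | zero => omega
    | succ m ih =>
      rcases Nat.eq_or_lt_of_le hj with h | h
      · rw [← h, h1]
      · have hm : 1 ≤ m := by omega
        have := hmono m hm
        have := ih hm
        omega
  have gap2 : ∀ c : ℕ, 1 ≤ c → nk (c + 1) + nk (c + 1) ≤ nk c + nk (c + 2) := by
    intro c hc
    have h := hgap c hc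
    have m1 := mono c (c + 1) hc (by omega)
    have m2 := mono (c + 1) (c + 2) (by omega) (by omega)
    omega
  have gapm : ∀ a c : ℕ, 1 ≤ a → a ≤ c → nk (a + 1) + nk c ≤ nk a + nk (c + 1) := by
    intro a c ha hac
    induction hac with
    | refl => omega
    | @step m h ih =>
      have G := gap2 m (le_trans ha h)
      simp only [Nat.succ_eq_add_one]
      have e : m + 2 = m + 1 + 1 := by omega
      rw [e] at G
      omega
  have super : ∀ t b : ℕ, 1 ≤ b → nk (t + 1) + nk b ≤ nk (t + b) + 1 := by
    intro t
    induction t with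
    | zero =>
      intro b hb
      rw [h1]
      have : 0 + b = b := by omega
      rw [this]
      omega
    | succ s ih =>
      intro b hb
      have IH := ih b hb
      have G := gapm (s + 1) (s + b) (by omega) (by omega)
      have e2 : s + 1 + b = s + b + 1 := by omega
      rw [e2]
      omega
  intro k n hk hn
  set P : ℕ → Prop := fun i => ∃ j, 1 ≤ j ∧ nk j = i with hP
  -- sums in terms of counts
  have hsum : ∀ S : Finset ℕ, ∑ i ∈ S, ρ i = (S.filter fun i => ¬ P i).card := by
    intro S
    rw [Finset.card_filter]
    refine Finset.sum_congr rfl fun i _ => ?_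
    by_cases h : P i
    · obtain ⟨j, hj, hji⟩ := h
      rw [if_neg (by simpa [hP] using (⟨j, hj, hji⟩ : P i)), ← hji, hρ0 j hj]
    · rw [if_pos h]
      refine hρ1 i fun j hj hji => h ⟨j, hj, hji⟩
  -- count of hits via index sets
  have cardeq : ∀ a b : ℕ, 1 ≤ a →
      ((Finset.Icc a b).filter P).card
        = ((Finset.Icc 1 b).filter fun j => a ≤ nk j ∧ nk j ≤ b).card := by
    intro a b ha
    refine (Finset.card_bij (fun j _ => nk j) ?_ ?_ ?_).symm
    · intro j hj
      simp only [Finset.mem_filter, Finset.mem_Icc] at hj ⊢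
      exact ⟨⟨hj.2.1, hj.2.2⟩, ⟨j, hj.1.1, rfl⟩⟩
    · intro j1 hj1 j2 hj2 hEq
      simp only [Finset.mem_filter, Finset.mem_Icc] at hj1 hj2
      rcases lt_trichotomy j1 j2 with h | h | h
      · exact absurd hEq (Nat.ne_of_lt (strictm j1 j2 hj1.1.1 h))
      · exact h
      · exact absurd hEq.symm (Nat.ne_of_lt (strictm j2 j1 hj2.1.1 h))
    · intro i hi
      simp only [Finset.mem_filter, Finset.mem_Icc] at hi
      obtain ⟨⟨hia, hib⟩, j, hj, rfl⟩ := hi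
      refine ⟨j, ?_, rfl⟩
      simp only [Finset.mem_filter, Finset.mem_Icc]
      exact ⟨⟨hj, le_trans (selfle j hj) hib⟩, hia, hib⟩
  -- least index hitting ≥ k+1
  have hex : ∃ j, 1 ≤ j ∧ k + 1 ≤ nk j := ⟨k + 1, by omega, selfle (k + 1) (by omega)⟩
  set j0 := Nat.find hex with hj0
  have hj0spec : 1 ≤ j0 ∧ k + 1 ≤ nk j0 := Nat.find_spec hex
  -- injection between index sets
  have keycard :
      ((Finset.Icc 1 (k + n)).filter fun j => k + 1 ≤ nk j ∧ nk j ≤ k + n).card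
        ≤ ((Finset.Icc 1 n).filter fun j => 1 ≤ nk j ∧ nk j ≤ n).card := by
    apply Finset.card_le_card_of_injOn (fun j => j - j0 + 1)
    · intro j hj
      simp only [Finset.mem_coe, Finset.mem_filter, Finset.mem_Icc] at hj ⊢
      obtain ⟨⟨hj1, _⟩, hjk, hjn⟩ := hj
      have hjge : j0 ≤ j := by rw [hj0]; exact Nat.find_min' hex ⟨hj1, hjk⟩
      have hs := super (j - j0) j0 hj0spec.1
      have e : j - j0 + j0 = j := by omega
      rw [e] at hs
      have hle : nk (j - j0 + 1) ≤ n := by omega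
      have hone : 1 ≤ nk (j - j0 + 1) := by
        rw [← h1]; exact mono 1 _ le_rfl (by omega)
      exact ⟨⟨by omega, le_trans (selfle _ (by omega)) hle⟩, hone, hle⟩
    · intro j1 hj1 j2 hj2 hEq
      simp only [Finset.coe_filter, Finset.mem_Icc, Set.mem_setOf_eq] at hj1 hj2
      have g1 : j0 ≤ j1 := by rw [hj0]; exact Nat.find_min' hex ⟨hj1.1.1, hj1.2.1⟩
      have g2 : j0 ≤ j2 := by rw [hj0]; exact Nat.find_min' hex ⟨hj2.1.1, hj2.2.1⟩
      have hEq' : j1 - j0 + 1 = j2 - j0 + 1 := hEq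
      omega
  -- assemble
  rw [hsum, hsum]
  have c1 := Finset.card_filter_add_card_filter_not (s := Finset.Icc 1 n) (p := P)
  have c2 := Finset.card_filter_add_card_filter_not
    (s := Finset.Icc (k + 1) (k + n)) (p := P)
  have e1 : (Finset.Icc 1 n).card = n := by rw [Nat.card_Icc]; omega
  have e2 : (Finset.Icc (k + 1) (k + n)).card = n := by rw [Nat.card_Icc]; omega
  have q1 := cardeq 1 n (le_rfl)
  have q2 := cardeq (k + 1) (k + n) (by omega)
  rw [q1] at c1
  rw [q2] at c2
  omega
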